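/- Let n ≥ 1 be an integer, α ∈ [0,1), and let y ∈ (0,∞)^n satisfy y_1 ≤ y_2 ≤ … ≤ y_n. Let i* be the smallest index i ∈ {1,…,n} such that y_i·(1 − ((i−1)/n)·α) > (α/n)·Σ_{j=i}^n y_j (such an index exists). Define x ∈ ℝ^n by x_i = α/n for i < i*, and x_i = (1 − ((i*−1)/n)·α)·y_i / (Σ_{j=i*}^n y_j) for i ≥ i*. Then x ∈ A_α and D(x‖y) ≤ D(v‖y) for every v ∈ A_α; that is, x is the Bregman (KL-type) projection of y onto the clipped simplex A_α. -/

import Mathlib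

open Finset

/-- Unnormalized negative-entropy Bregman divergence
`D(x‖y) = ∑ i, (x i * log (x i / y i) - x i + y i)` (with `0·log 0 = 0`,
which holds automatically since `Real.log 0 = 0`). -/
noncomputable def breg {n : ℕ} (x y : Fin n → ℝ) : ℝ :=
  ∑ i, (x i * Real.log (x i / y i) - x i + y i)

/-- The clipped simplex `A_α = {x : ∑ i, x i = 1 ∧ ∀ i, x i ≥ α / n}`. -/
def clippedSimplex (n : ℕ) (α : ℝ) : Set (Fin n → ℝ) :=
  {x | (∑ i, x i) = 1 ∧ ∀ i, α / n ≤ x i}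
/-- pointwise gradient inequality for negative entropy -/
lemma ptwise (x v y : ℝ) (hx : 0 < x) (hv : 0 ≤ v) (hy : 0 < y) :
    x * Real.log (x / y) - x + y + Real.log (x / y) * (v - x)
      ≤ v * Real.log (v / y) - v + y := by
  rcases eq_or_lt_of_le hv with h | h
  · subst h
    simp only [zero_div, Real.log_zero, mul_zero, zero_mul]
    have hl : Real.log (x / y) = Real.log x - Real.log y := Real.log_div hx.ne' hy.ne'
    nlinarith [hx]
  · have h1 : Real.log (x / v) ≤ x / v - 1 := Real.log_le_sub_one_of_pos (by positivity)
    rw [Real.log_div hx.ne' h.ne'] at h1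
    have h2 : v * (Real.log x - Real.log v) ≤ x - v := by
      have := mul_le_mul_of_nonneg_left h1 h.le
      calc v * (Real.log x - Real.log v) ≤ v * (x / v - 1) := this
        _ = x - v := by field_simp
    rw [Real.log_div hx.ne' hy.ne', Real.log_div h.ne' hy.ne']
    nlinarith [h2]

theorem stmt_1 (n : ℕ) (hn : 1 ≤ n) (α : ℝ) (hα : 0 ≤ α ∧ α < 1)
    (y : Fin n → ℝ) (hypos : ∀ i, 0 < y i) (hymono : Monotone y)
    (istar : Fin n)
    (histar : IsLeast {i : Fin n |
      y i * (1 - ((i : ℕ) : ℝ) / n * α) > α / n * ∑ j ∈ Finset.Ici i, y j} istar)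
    (x : Fin n → ℝ)
    (hx : ∀ i, x i = if i < istar then α / n
      else (1 - ((istar : ℕ) : ℝ) / n * α) * y i / ∑ j ∈ Finset.Ici istar, y j) :
    x ∈ clippedSimplex n α ∧ ∀ v ∈ clippedSimplex n α, breg x y ≤ breg v y := by
  have hn0 : (0:ℝ) < (n:ℝ) := by exact_mod_cast hn
  set S : ℝ := ∑ j ∈ Finset.Ici istar, y j with hSdef
  set c : ℝ := 1 - ((istar : ℕ) : ℝ) / n * α with hcdef
  have hS : 0 < S := Finset.sum_pos (fun i _ => hypos i) ⟨istar, Finset.mem_Ici.2 le_rfl⟩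
  have hstar : y istar * c > α / n * S := histar.1
  clear_value S c
  have hαn : 0 ≤ α / n := div_nonneg hα.1 hn0.le
  have hαnS : 0 ≤ α / n * S := mul_nonneg hαn hS.le
  have hc : 0 < c := by
    rcases mul_pos_iff.1 (lt_of_le_of_lt hαnS hstar) with ⟨_, h⟩ | ⟨h, _⟩
    · exact h
    · linarith [hypos istar]
  -- key inequality for indices below istar
  have hkey : ∀ i : Fin n, i < istar → y i * c ≤ α / n * S := by
    intro i hi
    have h1le : 1 ≤ (istar : ℕ) := by
      have := (Fin.lt_def.1 hi); omega
    set k : Fin n := ⟨(istar : ℕ) - 1, by omega⟩ with hkdef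
    have hkval : (k : ℕ) = (istar : ℕ) - 1 := rfl
    have hkc : ((k : ℕ) : ℝ) = ((istar : ℕ) : ℝ) - 1 := by
      rw [hkval]; push_cast [h1le]; ring
    have hknot : k ∉ {i : Fin n |
        y i * (1 - ((i : ℕ) : ℝ) / n * α) > α / n * ∑ j ∈ Finset.Ici i, y j} := by
      intro hmem
      have h2 : (istar : ℕ) ≤ (k : ℕ) := Fin.le_def.1 (histar.2 hmem)
      omega
    have hk : y k * (1 - ((k : ℕ) : ℝ) / n * α) ≤ α / n * ∑ j ∈ Finset.Ici k, y j := by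
      simpa using not_lt.1 hknot
    have hIci : ∑ j ∈ Finset.Ici k, y j = y k + S := by
      have hset : Finset.Ici k = insert k (Finset.Ici istar) := by
        ext j
        simp only [Finset.mem_Ici, Finset.mem_insert, Fin.le_def, Fin.ext_iff]
        omega
      rw [hset, Finset.sum_insert (by
        simp only [Finset.mem_Ici, Fin.le_def]
        omega), ← hSdef]
    rw [hIci, hkc] at hk
    have hyik : y i ≤ y k := hymono (by
      rw [Fin.le_def]; have := Fin.lt_def.1 hi; omega)
    have hykc : y k * c ≤ α / n * S := by
      have expand : y k * c = y k * (1 - (((istar : ℕ) : ℝ) - 1) / n * α) - y k * (α / n) := by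
        rw [hcdef]; field_simp; ring
      nlinarith [hk]
    calc y i * c ≤ y k * c := mul_le_mul_of_nonneg_right hyik hc.le
      _ ≤ α / n * S := hykc
  have hαpos : ∀ i : Fin n, i < istar → 0 < α / n := by
    intro i hi
    have h0 : 0 < y i * c := mul_pos (hypos i) hc
    have h1 : 0 < α / n * S := lt_of_lt_of_le h0 (hkey i hi)
    nlinarith [hS]
  -- positivity of x
  have hxpos : ∀ i, 0 < x i := by
    intro i
    rw [hx i]
    by_cases hi : i < istar
    · simp only [hi, if_true]
      exact hαpos i hi
    · simp only [hi, if_false]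
      exact div_pos (mul_pos hc (hypos i)) hS
  -- sums split
  have hdisj : Disjoint (Finset.Iio istar) (Finset.Ici istar) := by
    rw [Finset.disjoint_left]; intro a ha hb
    exact absurd (Finset.mem_Ici.1 hb) (not_le.2 (Finset.mem_Iio.1 ha))
  have huniv : (Finset.univ : Finset (Fin n)) = Finset.Iio istar ∪ Finset.Ici istar := by
    ext i; simp only [Finset.mem_univ, Finset.mem_union, Finset.mem_Iio, Finset.mem_Ici, true_iff]
    exact lt_or_ge i istar
  have hsplit : ∀ f : Fin n → ℝ,
      ∑ i, f i = ∑ i ∈ Finset.Iio istar, f i + ∑ i ∈ Finset.Ici istar, f i := by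
    intro f; rw [huniv, Finset.sum_union hdisj]
  -- sum of x is 1
  have hsum : ∑ i, x i = 1 := by
    rw [hsplit x]
    have h1 : ∑ i ∈ Finset.Iio istar, x i = ((istar : ℕ) : ℝ) * (α / n) := by
      rw [Finset.sum_congr rfl (fun i hi => by
        rw [hx i, if_pos (Finset.mem_Iio.1 hi)]), Finset.sum_const, Fin.card_Iio,
        nsmul_eq_mul]
    have h2 : ∑ i ∈ Finset.Ici istar, x i = c := by
      rw [Finset.sum_congr rfl (fun i hi => by
        rw [hx i, if_neg (not_lt.2 (Finset.mem_Ici.1 hi))])]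
      calc ∑ i ∈ Finset.Ici istar, c * y i / S
          = (c * ∑ i ∈ Finset.Ici istar, y i) / S := by
            rw [Finset.mul_sum, Finset.sum_div]
        _ = c * S / S := by rw [← hSdef]
        _ = c := mul_div_cancel_right₀ c hS.ne'
    rw [h1, h2, hcdef]; ring
  -- lower bound
  have hlb : ∀ i, α / n ≤ x i := by
    intro i
    rw [hx i]
    by_cases hi : i < istar
    · simp [hi]
    · simp only [hi, if_false]
      rw [le_div_iff₀ hS]
      have hyi : y istar ≤ y i := hymono (not_lt.1 hi)
      have h2 : c * y istar ≤ c * y i := mul_le_mul_of_nonneg_left hyi hc.le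
      linarith [hstar, h2]
  refine ⟨⟨hsum, hlb⟩, ?_⟩
  -- optimality
  intro v hv
  obtain ⟨hvsum, hvlb⟩ := hv
  have hvnn : ∀ i, 0 ≤ v i := fun i => le_trans hαn (hvlb i)
  have hsum_pt : breg x y + ∑ i, Real.log (x i / y i) * (v i - x i) ≤ breg v y := by
    unfold breg
    rw [← Finset.sum_add_distrib]
    exact Finset.sum_le_sum fun i _ => ptwise (x i) (v i) (y i) (hxpos i) (hvnn i) (hypos i)
  suffices hG : 0 ≤ ∑ i, Real.log (x i / y i) * (v i - x i) by linarith
  set L : ℝ := Real.log (c / S) with hLdef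
  have hzero : ∑ i, L * (v i - x i) = 0 := by
    rw [← Finset.mul_sum, Finset.sum_sub_distrib, hvsum, hsum]; ring
  have hsplit2 : ∑ i, Real.log (x i / y i) * (v i - x i)
      = ∑ i, (Real.log (x i / y i) - L) * (v i - x i) + ∑ i, L * (v i - x i) := by
    rw [← Finset.sum_add_distrib]
    exact Finset.sum_congr rfl fun i _ => by ring
  rw [hsplit2, hzero, add_zero]
  apply Finset.sum_nonneg
  intro i _
  by_cases hi : i < istar
  · rw [hx i, if_pos hi]
    have hα0 : 0 < α / n := hαpos i hi
    apply mul_nonneg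
    · have hcs : 0 < c / S := div_pos hc hS
      have hle : c / S ≤ (α / n) / y i := by
        rw [div_le_div_iff₀ hS (hypos i)]
        nlinarith [hkey i hi]
      have := Real.log_le_log hcs hle
      linarith
    · have := hvlb i; linarith
  · rw [hx i, if_neg hi]
    have hratio : c * y i / S / y i = c / S := by
      rw [div_div, mul_comm S (y i), ← div_div, mul_div_assoc, div_self (hypos i).ne',
        mul_one]
    rw [hratio, ← hLdef, sub_self, zero_mul]
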